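/- For φ ∈ [−π/2, 0], define λ(φ) = (2 cos φ + 2 cos φ sin φ)/8 and λ'(φ) = (−2 sin φ + 2 cos 2φ)/8, and set ṡ(φ) = 2λ(φ)·cos φ − λ'(φ)·sin φ and ν̇(φ) = 2λ(φ)·sin φ + λ'(φ)·cos φ. Then for every φ ∈ [−π/2, 0] one has 0 ≤ ν̇(φ) ≤ ṡ(φ)/2. -/
import Mathlib

open Real

/-- On `φ ∈ [−π/2, 0]`, with `λ(φ) = (2cos φ + 2cos φ sin φ)/8`,
`λ'(φ) = (−2sin φ + 2cos 2φ)/8`, `ṡ = 2λcos φ − λ'sin φ`,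
`ν̇ = 2λsin φ + λ'cos φ`, one has `0 ≤ ν̇ ≤ ṡ/2`. -/
theorem stmt_8 (φ : ℝ) (hφ : φ ∈ Set.Icc (-(π/2)) 0) :
    0 ≤ 2 * ((2 * Real.cos φ + 2 * Real.cos φ * Real.sin φ) / 8) * Real.sin φ
        + ((-2 * Real.sin φ + 2 * Real.cos (2*φ)) / 8) * Real.cos φ ∧
    2 * ((2 * Real.cos φ + 2 * Real.cos φ * Real.sin φ) / 8) * Real.sin φ
        + ((-2 * Real.sin φ + 2 * Real.cos (2*φ)) / 8) * Real.cos φ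
      ≤ (2 * ((2 * Real.cos φ + 2 * Real.cos φ * Real.sin φ) / 8) * Real.cos φ
        - ((-2 * Real.sin φ + 2 * Real.cos (2*φ)) / 8) * Real.sin φ) / 2 := by
  obtain ⟨h1, h2⟩ := hφ
  have hc : 0 ≤ Real.cos φ := Real.cos_nonneg_of_mem_Icc ⟨h1, h2.trans (by positivity)⟩
  have hc1 : Real.cos φ ≤ 1 := Real.cos_le_one φ
  have hs0 : Real.sin φ ≤ 0 := Real.sin_nonpos_of_nonpos_of_neg_pi_le h2 (by linarith [Real.pi_pos])
  have hs1 : -1 ≤ Real.sin φ := Real.neg_one_le_sin φ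
  have hcos2 : Real.cos (2*φ) = 1 - 2 * Real.sin φ ^ 2 := by
    rw [Real.cos_two_mul' ] <;> nlinarith [Real.sin_sq_add_cos_sq φ]
  have hpy := Real.sin_sq_add_cos_sq φ
  constructor <;> rw [hcos2] <;> nlinarith [mul_nonneg hc (by linarith : (0:ℝ) ≤ 1 + Real.sin φ), mul_nonneg (by linarith : (0:ℝ) ≤ 1 + Real.sin φ) (by linarith : (0:ℝ) ≤ 2 - Real.sin φ - 2*Real.cos φ)]
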